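/- On the unit 2-sphere, for multi-indices a, b with |a| = |b| = l, ∫_{S²} φ₁ ⟨J∇φ^a, ∇φ^b⟩ dM = (a₁b₂ − a₂b₁) ∫ φ^{a+b−ε₂+ε₃} + (−a₁b₃ + a₃b₁) ∫ φ^{a+b+ε₂−ε₃} + (a₂b₃ − a₃b₂) ∫ φ^{a+b+2ε₁−ε₂−ε₃}, all integrals over S². -/

import Mathlib

open MeasureTheory Real
open scoped RealInnerProductSpace

noncomputable section

/-- Euclidean 3-space. -/
abbrev E3 := EuclideanSpace ℝ (Fin 3)

/-- The unit 2-sphere `S² ⊂ ℝ³` as a subset. -/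
def Sph : Set E3 := Metric.sphere (0 : E3) 1

/-- The round surface measure on the unit 2-sphere. -/
def μS : Measure (Metric.sphere (0 : E3) 1) := (volume : Measure E3).toSphere

/-- The Riemannian gradient on the unit sphere, computed extrinsically: the Euclidean
gradient of the degree-zero homogeneous extension of `F` (which is automatically
tangent to the sphere). -/
def sgrad {n : ℕ} (F : EuclideanSpace ℝ (Fin n) → ℝ) (x : EuclideanSpace ℝ (Fin n)) :
    EuclideanSpace ℝ (Fin n) :=
  gradient (fun y => F (‖y‖⁻¹ • y)) x

/-- The Euclidean Laplacian. -/
def elap {n : ℕ} (F : EuclideanSpace ℝ (Fin n) → ℝ) (x : EuclideanSpace ℝ (Fin n)) : ℝ :=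
  ∑ i, fderiv ℝ (fun y => fderiv ℝ F y (EuclideanSpace.single i 1)) x
    (EuclideanSpace.single i 1)

/-- The Laplace–Beltrami operator on the unit sphere, computed extrinsically as the
Euclidean Laplacian of the degree-zero homogeneous extension. -/
def slap {n : ℕ} (F : EuclideanSpace ℝ (Fin n) → ℝ) (x : EuclideanSpace ℝ (Fin n)) : ℝ :=
  elap (fun y => F (‖y‖⁻¹ • y)) x

/-- The Riemannian Hessian on the unit sphere, evaluated on tangent vectors `v, w`:
the derivative of the (extended, tangential) gradient field. -/
def shess {n : ℕ} (F : EuclideanSpace ℝ (Fin n) → ℝ) (x v w : EuclideanSpace ℝ (Fin n)) :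
    ℝ :=
  ⟪fderiv ℝ (sgrad F) x v, w⟫

/-- The cross product on `ℝ³`. -/
def cross3 (x v : E3) : E3 :=
  (WithLp.equiv 2 (Fin 3 → ℝ)).symm
    ![x 1 * v 2 - x 2 * v 1, x 2 * v 0 - x 0 * v 2, x 0 * v 1 - x 1 * v 0]

/-- The standard complex structure of `S²` at a point `x`: rotation by `π/2` of the
tangent plane `x^⊥`, given by `v ↦ x × v`. -/
def Jop (x v : E3) : E3 := cross3 x v

lemma prod_sub_delta (a : Fin 3 → ℕ) (x : E3) (i : Fin 3) :
    (∏ j, x j ^ (a j - if j = i then 1 else 0))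
      = x i ^ (a i - 1) * ∏ j ∈ Finset.univ.erase i, x j ^ a j := by
  rw [← Finset.mul_prod_erase Finset.univ _ (Finset.mem_univ i), if_pos rfl]
  congr 1
  refine Finset.prod_congr rfl fun j hj => ?_
  rw [if_neg (Finset.ne_of_mem_erase hj), Nat.sub_zero]

lemma ext_eq (a : Fin 3 → ℕ) :
    (fun y : E3 => ∏ i, ((‖y‖⁻¹ • y) i) ^ a i)
      = fun y : E3 => (‖y‖⁻¹) ^ (∑ i, a i) * ∏ i, (y i) ^ a i := by
  funext y
  simp only [PiLp.smul_apply, smul_eq_mul, mul_pow, Finset.prod_mul_distrib,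
    Finset.prod_pow_eq_pow_sum]

lemma hasGradient_monomial (a : Fin 3 → ℕ) (x : E3) (hx : ‖x‖ = 1) :
    HasGradientAt (fun y : E3 => ∏ i, ((‖y‖⁻¹ • y) i) ^ a i)
      ((∑ i, ((a i : ℝ) * ∏ j, x j ^ (a j - if j = i then 1 else 0)) •
          EuclideanSpace.single i (1:ℝ))
        - (((∑ i, a i : ℕ) : ℝ) * ∏ i, x i ^ a i) • x) x := by
  have h1 : HasFDerivAt (fun y : E3 => ‖y‖ ^ 2) (2 • innerSL ℝ x) x :=
    (hasStrictFDerivAt_norm_sq x).hasFDerivAt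
  have h2 := h1.sqrt (by rw [hx]; norm_num)
  have heq : (fun y : E3 => √(‖y‖ ^ 2)) = fun y : E3 => ‖y‖ :=
    funext fun y => Real.sqrt_sq (norm_nonneg y)
  rw [heq] at h2
  have hnorm : HasFDerivAt (fun y : E3 => ‖y‖) (innerSL ℝ x) x := by
    refine h2.congr_fderiv ?_
    rw [hx]
    ext v
    simp [smul_smul]
  have hinv := (hasDerivAt_inv (x := ‖x‖) (by rw [hx]; norm_num)).comp_hasFDerivAt x hnorm
  simp only [Function.comp_def] at hinv
  have hpow := (hasDerivAt_pow (∑ i, a i) (‖x‖⁻¹)).comp_hasFDerivAt x hinv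
  simp only [Function.comp_def] at hpow
  have hP : HasFDerivAt (fun y : E3 => ∏ i, (y i) ^ a i)
      (∑ i, (∏ j ∈ Finset.univ.erase i, x j ^ a j) •
        (((a i : ℝ) * x i ^ (a i - 1)) • (EuclideanSpace.proj i : E3 →L[ℝ] ℝ))) x := by
    refine HasFDerivAt.finset_prod fun i _ => ?_
    have := (hasDerivAt_pow (a i) (x i)).comp_hasFDerivAt x
      (EuclideanSpace.proj (𝕜 := ℝ) i).hasFDerivAt
    simp only [Function.comp_def] at this
    exact this
  have hmul := hpow.mul hP
  rw [ext_eq a, hasGradientAt_iff_hasFDerivAt]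
  refine hmul.congr_fderiv ?_
  ext v
  simp only [ContinuousLinearMap.add_apply, ContinuousLinearMap.smul_apply,
    ContinuousLinearMap.coe_sum', Finset.sum_apply, ContinuousLinearMap.coe_smul',
    Pi.smul_apply, ContinuousLinearMap.neg_apply, smul_eq_mul, hx, inv_one, one_pow,
    PiLp.proj_apply, InnerProductSpace.toDual_apply_apply, innerSL_apply_apply]
  rw [inner_sub_left, inner_smul_left, sum_inner]
  simp only [inner_smul_left, EuclideanSpace.inner_single_left, RCLike.conj_to_real,
    conj_trivial, one_mul]
  rw [sub_eq_add_neg]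
  congr 1
  · refine Finset.sum_congr rfl fun i _ => ?_
    rw [prod_sub_delta]
    ring
  · ring

set_option maxHeartbeats 1000000 in
lemma key_scalar (a0 a1 a2 b0 b1 b2 : ℕ) (x0 x1 x2 : ℝ) :
    x0 * (((x1 * ((a2:ℝ) * (x0^a0*x1^a1*x2^(a2-1)) - ((a0+a1+a2:ℕ):ℝ)*(x0^a0*x1^a1*x2^a2)*x2)
         - x2 * ((a1:ℝ) * (x0^a0*x1^(a1-1)*x2^a2) - ((a0+a1+a2:ℕ):ℝ)*(x0^a0*x1^a1*x2^a2)*x1))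
          * ((b0:ℝ) * (x0^(b0-1)*x1^b1*x2^b2) - ((b0+b1+b2:ℕ):ℝ)*(x0^b0*x1^b1*x2^b2)*x0))
      + ((x2 * ((a0:ℝ) * (x0^(a0-1)*x1^a1*x2^a2) - ((a0+a1+a2:ℕ):ℝ)*(x0^a0*x1^a1*x2^a2)*x0)
         - x0 * ((a2:ℝ) * (x0^a0*x1^a1*x2^(a2-1)) - ((a0+a1+a2:ℕ):ℝ)*(x0^a0*x1^a1*x2^a2)*x2))
          * ((b1:ℝ) * (x0^b0*x1^(b1-1)*x2^b2) - ((b0+b1+b2:ℕ):ℝ)*(x0^b0*x1^b1*x2^b2)*x1))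
      + ((x0 * ((a1:ℝ) * (x0^a0*x1^(a1-1)*x2^a2) - ((a0+a1+a2:ℕ):ℝ)*(x0^a0*x1^a1*x2^a2)*x1)
         - x1 * ((a0:ℝ) * (x0^(a0-1)*x1^a1*x2^a2) - ((a0+a1+a2:ℕ):ℝ)*(x0^a0*x1^a1*x2^a2)*x0))
          * ((b2:ℝ) * (x0^b0*x1^b1*x2^(b2-1)) - ((b0+b1+b2:ℕ):ℝ)*(x0^b0*x1^b1*x2^b2)*x2)))
  = ((a0:ℝ)*b1 - (a1:ℝ)*b0) * (x0^(a0+b0) * x1^(a1+b1-1) * x2^(a2+b2+1))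
  + (-(a0:ℝ)*b2 + (a2:ℝ)*b0) * (x0^(a0+b0) * x1^(a1+b1+1) * x2^(a2+b2-1))
  + ((a1:ℝ)*b2 - (a2:ℝ)*b1) * (x0^(a0+b0+2) * x1^(a1+b1-1) * x2^(a2+b2-1)) := by
  obtain _|a0 := a0 <;> obtain _|a1 := a1 <;> obtain _|a2 := a2 <;>
    obtain _|b0 := b0 <;> obtain _|b1 := b1 <;> obtain _|b2 := b2 <;>
  · push_cast [Nat.succ_sub_one, Nat.succ_add_sub_one, Nat.add_succ_sub_one]
    ring

lemma pointwise (a b : Fin 3 → ℕ) (x : E3) (hx : ‖x‖ = 1) :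
    x 0 * ⟪Jop x (sgrad (fun y => ∏ i, (y i) ^ (a i)) x),
        sgrad (fun y => ∏ i, (y i) ^ (b i)) x⟫
      = ((a 0 : ℝ) * (b 1 : ℝ) - (a 1 : ℝ) * (b 0 : ℝ)) *
          (∏ j, (x j) ^ (a j + b j + (if j = 2 then 1 else 0) - (if j = 1 then 1 else 0)))
      + (-(a 0 : ℝ) * (b 2 : ℝ) + (a 2 : ℝ) * (b 0 : ℝ)) *
          (∏ j, (x j) ^ (a j + b j + (if j = 1 then 1 else 0) - (if j = 2 then 1 else 0)))
      + ((a 1 : ℝ) * (b 2 : ℝ) - (a 2 : ℝ) * (b 1 : ℝ)) *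
          (∏ j, (x j) ^ (a j + b j + (if j = 0 then 2 else 0) - (if j = 0 then 0 else 1))) := by
  have hga : sgrad (fun y => ∏ i, (y i) ^ (a i)) x
      = (∑ i, ((a i : ℝ) * ∏ j, x j ^ (a j - if j = i then 1 else 0)) •
          EuclideanSpace.single i (1:ℝ))
        - (((∑ i, a i : ℕ) : ℝ) * ∏ i, x i ^ a i) • x :=
    (hasGradient_monomial a x hx).gradient
  have hgb : sgrad (fun y => ∏ i, (y i) ^ (b i)) x
      = (∑ i, ((b i : ℝ) * ∏ j, x j ^ (b j - if j = i then 1 else 0)) •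
          EuclideanSpace.single i (1:ℝ))
        - (((∑ i, b i : ℕ) : ℝ) * ∏ i, x i ^ b i) • x :=
    (hasGradient_monomial b x hx).gradient
  rw [hga, hgb]
  simp only [Jop, cross3, PiLp.inner_apply, RCLike.inner_apply, conj_trivial,
    WithLp.equiv_symm_apply, PiLp.toLp_apply, Fin.sum_univ_three, Fin.prod_univ_three,
    PiLp.sub_apply, PiLp.smul_apply, smul_eq_mul, PiLp.add_apply,
    EuclideanSpace.single_apply, Matrix.cons_val_zero, Matrix.cons_val_one, Matrix.head_cons,
    Matrix.cons_val_two, Matrix.tail_cons, Fin.reduceEq, reduceIte]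
  norm_num
  linear_combination (norm := (push_cast; ring1))
    key_scalar (a 0) (a 1) (a 2) (b 0) (b 1) (b 2) (x 0) (x 1) (x 2)

/-- On the unit 2-sphere, for multi-indices `a, b` with `|a| = |b| = l`,
`∫_{S²} φ₁ ⟨J∇φ^a, ∇φ^b⟩ dM
  = (a₁b₂ − a₂b₁) ∫ φ^{a+b−ε₂+ε₃} + (−a₁b₃ + a₃b₁) ∫ φ^{a+b+ε₂−ε₃}
    + (a₂b₃ − a₃b₂) ∫ φ^{a+b+2ε₁−ε₂−ε₃}`
(indices `1,2,3` correspond to `0,1,2 : Fin 3`; terms whose multi-index becomes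
negative vanish). -/
theorem integral_coord_inner_J_grad_monomials (l : ℕ) (a b : Fin 3 → ℕ)
    (ha : (∑ i, a i) = l) (hb : (∑ i, b i) = l) :
    ∫ x : Metric.sphere (0 : E3) 1,
        ((x : E3) 0) * ⟪Jop x (sgrad (fun y => ∏ i, (y i) ^ (a i)) (x : E3)),
          sgrad (fun y => ∏ i, (y i) ^ (b i)) (x : E3)⟫ ∂μS =
      ((a 0 : ℝ) * (b 1 : ℝ) - (a 1 : ℝ) * (b 0 : ℝ)) *
          (∫ x : Metric.sphere (0 : E3) 1,
            ∏ j, ((x : E3) j) ^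
              (a j + b j + (if j = 2 then 1 else 0) - (if j = 1 then 1 else 0)) ∂μS) +
        (-(a 0 : ℝ) * (b 2 : ℝ) + (a 2 : ℝ) * (b 0 : ℝ)) *
          (∫ x : Metric.sphere (0 : E3) 1,
            ∏ j, ((x : E3) j) ^
              (a j + b j + (if j = 1 then 1 else 0) - (if j = 2 then 1 else 0)) ∂μS) +
        ((a 1 : ℝ) * (b 2 : ℝ) - (a 2 : ℝ) * (b 1 : ℝ)) *
          (∫ x : Metric.sphere (0 : E3) 1,
            ∏ j, ((x : E3) j) ^
              (a j + b j + (if j = 0 then 2 else 0) - (if j = 0 then 0 else 1)) ∂μS) := by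

  have hx1 : ∀ x : Metric.sphere (0 : E3) 1, ‖(x : E3)‖ = 1 := by
    intro x
    have hm := x.2
    rwa [mem_sphere_iff_norm, sub_zero] at hm
  haveI : IsFiniteMeasure μS :=
    inferInstanceAs (IsFiniteMeasure (volume : Measure E3).toSphere)
  have hInt : ∀ e : Fin 3 → ℕ,
      Integrable (fun x : Metric.sphere (0 : E3) 1 => ∏ j, ((x : E3) j) ^ (e j)) μS := by
    intro e
    have hc : Continuous (fun x : Metric.sphere (0 : E3) 1 => ∏ j, ((x : E3) j) ^ (e j)) := by
      refine continuous_finset_prod _ fun j _ => ?_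
      exact ((EuclideanSpace.proj (𝕜 := ℝ) j).continuous.comp continuous_subtype_val).pow _
    exact hc.integrable_of_hasCompactSupport (HasCompactSupport.of_compactSpace _)
  set c1 : ℝ := ((a 0 : ℝ) * (b 1 : ℝ) - (a 1 : ℝ) * (b 0 : ℝ)) with hc1
  set c2 : ℝ := (-(a 0 : ℝ) * (b 2 : ℝ) + (a 2 : ℝ) * (b 0 : ℝ)) with hc2
  set c3 : ℝ := ((a 1 : ℝ) * (b 2 : ℝ) - (a 2 : ℝ) * (b 1 : ℝ)) with hc3
  have step : (∫ x : Metric.sphere (0 : E3) 1,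
        ((x : E3) 0) * ⟪Jop x (sgrad (fun y => ∏ i, (y i) ^ (a i)) (x : E3)),
          sgrad (fun y => ∏ i, (y i) ^ (b i)) (x : E3)⟫ ∂μS)
      = ∫ x : Metric.sphere (0 : E3) 1,
          (c1 * ∏ j, ((x : E3) j) ^
              (a j + b j + (if j = 2 then 1 else 0) - (if j = 1 then 1 else 0))
          + c2 * ∏ j, ((x : E3) j) ^
              (a j + b j + (if j = 1 then 1 else 0) - (if j = 2 then 1 else 0))
          + c3 * ∏ j, ((x : E3) j) ^
              (a j + b j + (if j = 0 then 2 else 0) - (if j = 0 then 0 else 1))) ∂μS := by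
    refine integral_congr_ae (Filter.Eventually.of_forall fun x => ?_)
    exact pointwise a b (x : E3) (hx1 x)
  have i1 := hInt (fun j => a j + b j + (if j = 2 then 1 else 0) - (if j = 1 then 1 else 0))
  have i2 := hInt (fun j => a j + b j + (if j = 1 then 1 else 0) - (if j = 2 then 1 else 0))
  have i3 := hInt (fun j => a j + b j + (if j = 0 then 2 else 0) - (if j = 0 then 0 else 1))
  have i12 : Integrable (fun x : Metric.sphere (0 : E3) 1 =>
      c1 * ∏ j, ((x : E3) j) ^ (a j + b j + (if j = 2 then 1 else 0) - (if j = 1 then 1 else 0))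
      + c2 * ∏ j, ((x : E3) j) ^ (a j + b j + (if j = 1 then 1 else 0) - (if j = 2 then 1 else 0))) μS :=
    (i1.const_mul c1).add (i2.const_mul c2)
  have i3' : Integrable (fun x : Metric.sphere (0 : E3) 1 =>
      c3 * ∏ j, ((x : E3) j) ^ (a j + b j + (if j = 0 then 2 else 0) - (if j = 0 then 0 else 1))) μS :=
    i3.const_mul c3
  have i1' : Integrable (fun x : Metric.sphere (0 : E3) 1 =>
      c1 * ∏ j, ((x : E3) j) ^ (a j + b j + (if j = 2 then 1 else 0) - (if j = 1 then 1 else 0))) μS :=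
    i1.const_mul c1
  have i2' : Integrable (fun x : Metric.sphere (0 : E3) 1 =>
      c2 * ∏ j, ((x : E3) j) ^ (a j + b j + (if j = 1 then 1 else 0) - (if j = 2 then 1 else 0))) μS :=
    i2.const_mul c2
  rw [step, integral_add i12 i3', integral_add i1' i2',
    integral_const_mul, integral_const_mul, integral_const_mul]
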